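/- Let F be a field of characteristic ≠ 2 and T, S strictly lower triangular n×n matrices over F that are equivalent by a finite sequence of elementary triangular operations (each of type P, F, or Q, applied where well-defined). Then A(T) ≅ A(S) as F-algebras via a degree-preserving isomorphism. -/

import Mathlib

open scoped BigOperators

noncomputable section

variable {F : Type} [Field F]

/-- `T` is strictly lower triangular. -/
def SLT {n : ℕ} (T : Matrix (Fin n) (Fin n) F) : Prop :=
  ∀ i j : Fin n, i ≤ j → T i j = 0

/-- The ideal of relations defining the nil graded algebra `A(T)`:
`X i ^ 2 = ∑ j < i, T i j * X j * X i` (for `i = 0` the sum is empty, giving `X 0 ^ 2 = 0`). -/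
def ntIdeal {n : ℕ} (T : Matrix (Fin n) (Fin n) F) : Ideal (MvPolynomial (Fin n) F) :=
  Ideal.span {p | ∃ i : Fin n,
    p = MvPolynomial.X i ^ 2 -
      ∑ j ∈ Finset.univ.filter (fun j => j < i),
        MvPolynomial.C (T i j) * MvPolynomial.X j * MvPolynomial.X i}

/-- The nil graded algebra `A(T)` associated to the strictly lower triangular matrix `T`. -/
abbrev NTAlg {n : ℕ} (T : Matrix (Fin n) (Fin n) F) : Type :=
  MvPolynomial (Fin n) F ⧸ ntIdeal T

/-- The generator `X i` of `A(T)`. -/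
def ntGen {n : ℕ} (T : Matrix (Fin n) (Fin n) F) (i : Fin n) : NTAlg T :=
  Ideal.Quotient.mk (ntIdeal T) (MvPolynomial.X i)

/-- There is a degree-preserving isomorphism `A(T) → A(S)`, i.e. an algebra isomorphism
sending each generator to an `F`-linear combination of the generators of the target. -/
def NTIso {n : ℕ} (T S : Matrix (Fin n) (Fin n) F) : Prop :=
  ∃ e : NTAlg T ≃ₐ[F] NTAlg S, ∃ Γ : Matrix (Fin n) (Fin n) F,
    ∀ j : Fin n, e (ntGen T j) = ∑ i : Fin n, Γ i j • ntGen S i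

/-- Elementary triangular operation `P_{r₁}(·, α)`. -/
def ETOP {n : ℕ} (T S : Matrix (Fin n) (Fin n) F) : Prop :=
  ∃ (r₁ : Fin n) (α : F), α ≠ 0 ∧
    ∀ r k : Fin n, S r k =
      if r = r₁ then T r k / α else if k = r₁ then α * T r k else T r k

/-- Elementary triangular operation `F_{(r₁,r₂)}` (with its well-definedness restrictions). -/
def ETOF {n : ℕ} (T S : Matrix (Fin n) (Fin n) F) : Prop :=
  ∃ r₁ r₂ : Fin n, r₁ < r₂ ∧
    (∀ j : Fin n, r₁ ≤ j → T r₂ j = 0) ∧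
    (∀ r : Fin n, r₁ < r → r < r₂ → T r r₁ = 0) ∧
    ∀ r k : Fin n, S r k = T (Equiv.swap r₁ r₂ r) (Equiv.swap r₁ r₂ k)

/-- Elementary triangular operation `Q_{(r₀,k₀)}(·, β)` (with its well-definedness restrictions). -/
def ETOQ {n : ℕ} (T S : Matrix (Fin n) (Fin n) F) : Prop :=
  ∃ (k₀ r₀ : Fin n) (β : F), k₀ < r₀ ∧
    (∀ j : Fin n, k₀ < j → T r₀ j = 0) ∧
    (k₀.val = 0 ∨ (0 < k₀.val ∧
      ∀ i : Fin n, i < k₀ → T r₀ i + T r₀ k₀ * T k₀ i = β * T k₀ i)) ∧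
    ∀ r k : Fin n, S r k =
      if r = r₀ ∧ k = k₀ then T r₀ k₀ - 2 * β
      else if r₀ < r ∧ k = k₀ then T r k₀ + β * T r r₀
      else T r k

set_option linter.unusedTactic false

namespace NTAux

open MvPolynomial

variable {n : ℕ}

def relP (T : Matrix (Fin n) (Fin n) F) (i : Fin n) : MvPolynomial (Fin n) F :=
  X i ^ 2 - ∑ j ∈ Finset.univ.filter (fun j => j < i), C (T i j) * X j * X i

lemma ntIdeal_eq (T : Matrix (Fin n) (Fin n) F) :
    ntIdeal T = Ideal.span {p | ∃ i, p = relP T i} := rfl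

lemma relP_mem (T : Matrix (Fin n) (Fin n) F) (i : Fin n) : relP T i ∈ ntIdeal T :=
  Ideal.subset_span ⟨i, rfl⟩

def liftHom (T S : Matrix (Fin n) (Fin n) F) (f : Fin n → MvPolynomial (Fin n) F)
    (h : ∀ i, aeval f (relP T i) ∈ ntIdeal S) : NTAlg T →ₐ[F] NTAlg S :=
  Ideal.Quotient.liftₐ (ntIdeal T) ((Ideal.Quotient.mkₐ F (ntIdeal S)).comp (aeval f)) (by
    intro a ha
    have hle : ntIdeal T ≤ Ideal.comap (aeval (R := F) f).toRingHom (ntIdeal S) := by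
      rw [ntIdeal_eq T, Ideal.span_le]
      rintro p ⟨i, rfl⟩
      exact h i
    have h2 : (aeval (R := F) f) a ∈ ntIdeal S := hle ha
    show Ideal.Quotient.mk (ntIdeal S) ((aeval (R := F) f) a) = 0
    exact (Ideal.Quotient.eq_zero_iff_mem).2 h2)

@[simp] lemma liftHom_mk (T S : Matrix (Fin n) (Fin n) F) (f : Fin n → MvPolynomial (Fin n) F)
    (h : ∀ i, aeval f (relP T i) ∈ ntIdeal S) (p : MvPolynomial (Fin n) F) :
    liftHom T S f h (Ideal.Quotient.mk (ntIdeal T) p) = Ideal.Quotient.mk (ntIdeal S) (aeval f p) := rfl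

def mkEquiv (T S : Matrix (Fin n) (Fin n) F) (f g : Fin n → MvPolynomial (Fin n) F)
    (hf : ∀ i, aeval f (relP T i) ∈ ntIdeal S)
    (hg : ∀ i, aeval g (relP S i) ∈ ntIdeal T)
    (hgf : ∀ i, aeval g (f i) = X i)
    (hfg : ∀ i, aeval f (g i) = X i) : NTAlg T ≃ₐ[F] NTAlg S :=
  AlgEquiv.ofAlgHom (liftHom T S f hf) (liftHom S T g hg)
    (Ideal.Quotient.algHom_ext F (MvPolynomial.algHom_ext fun i => by
      show (liftHom T S f hf) ((liftHom S T g hg) (Ideal.Quotient.mk (ntIdeal S) (X i)))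
        = Ideal.Quotient.mk (ntIdeal S) (X i)
      rw [liftHom_mk, liftHom_mk, aeval_X, hfg i]))
    (Ideal.Quotient.algHom_ext F (MvPolynomial.algHom_ext fun i => by
      show (liftHom S T g hg) ((liftHom T S f hf) (Ideal.Quotient.mk (ntIdeal T) (X i)))
        = Ideal.Quotient.mk (ntIdeal T) (X i)
      rw [liftHom_mk, liftHom_mk, aeval_X, hgf i]))

lemma ntIso_of (T S : Matrix (Fin n) (Fin n) F) (f g : Fin n → MvPolynomial (Fin n) F)
    (Γ : Matrix (Fin n) (Fin n) F)
    (hf : ∀ i, aeval f (relP T i) ∈ ntIdeal S)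
    (hg : ∀ i, aeval g (relP S i) ∈ ntIdeal T)
    (hgf : ∀ i, aeval g (f i) = X i)
    (hfg : ∀ i, aeval f (g i) = X i)
    (hΓ : ∀ j, f j = ∑ i, C (Γ i j) * X i) : NTIso T S := by
  refine ⟨mkEquiv T S f g hf hg hgf hfg, Γ, fun j => ?_⟩
  have : mkEquiv T S f g hf hg hgf hfg (ntGen T j)
      = Ideal.Quotient.mk (ntIdeal S) (f j) := by
    simp [mkEquiv, ntGen]
  rw [this, hΓ j, map_sum]
  refine Finset.sum_congr rfl fun i _ => ?_
  rw [← smul_eq_C_mul]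
  exact map_smul (Ideal.Quotient.mkₐ F (ntIdeal S)) _ _

lemma ntIso_refl (T : Matrix (Fin n) (Fin n) F) : NTIso T T := by
  refine ⟨AlgEquiv.refl, 1, fun j => ?_⟩
  simp [Matrix.one_apply, ite_smul]

lemma ntIso_trans {T U S : Matrix (Fin n) (Fin n) F} (h1 : NTIso T U) (h2 : NTIso U S) :
    NTIso T S := by
  obtain ⟨e₁, Γ₁, hΓ₁⟩ := h1
  obtain ⟨e₂, Γ₂, hΓ₂⟩ := h2
  refine ⟨e₁.trans e₂, Γ₂ * Γ₁, fun j => ?_⟩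
  simp only [AlgEquiv.trans_apply, hΓ₁, map_sum, map_smul, hΓ₂, Finset.smul_sum, smul_smul]
  rw [Finset.sum_comm]
  refine Finset.sum_congr rfl fun k _ => ?_
  rw [Matrix.mul_apply, Finset.sum_smul]
  refine Finset.sum_congr rfl fun i _ => ?_
  rw [mul_comm]

end NTAux

-- appended to infra for testing
namespace NTAux
open MvPolynomial
variable {n : ℕ}

lemma scaleMem (T S : Matrix (Fin n) (Fin n) F) (c : Fin n → F)
    (key : ∀ i j : Fin n, j < i → T i j * (c j * c i) = c i ^ 2 * S i j) :
    ∀ i, aeval (fun k => C (c k) * X k) (relP T i) ∈ ntIdeal S := by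
  intro i
  have heq : aeval (fun k => (C (c k) * X k : MvPolynomial (Fin n) F)) (relP T i)
      = C (c i) ^ 2 * relP S i := by
    simp only [relP, map_sub, map_pow, map_sum, map_mul, aeval_X, aeval_C,
      MvPolynomial.algebraMap_eq]
    rw [mul_sub, Finset.mul_sum]
    refine congrArg₂ (· - ·) ?_ ?_
    · ring
    · refine Finset.sum_congr rfl fun j hj => ?_
      have hlt : j < i := (Finset.mem_filter.1 hj).2
      have h : (C (T i j) : MvPolynomial (Fin n) F) * C (c j) * C (c i)
          = C (c i) ^ 2 * C (S i j) := by
        simpa only [← map_mul, ← map_pow, mul_assoc] using congrArg C (key i j hlt)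
      linear_combination (X j * X i : MvPolynomial (Fin n) F) * h
  rw [heq]
  exact Ideal.mul_mem_left _ _ (relP_mem S i)

lemma stepP (T S : Matrix (Fin n) (Fin n) F) (h : ETOP T S) : NTIso T S := by
  obtain ⟨r₁, α, hα, hSdef⟩ := h
  set c : Fin n → F := fun i => if i = r₁ then α else 1 with hc
  set c' : Fin n → F := fun i => if i = r₁ then α⁻¹ else 1 with hc'
  have hcc' : ∀ i, c i * c' i = 1 := by
    intro i; simp only [hc, hc']; split_ifs
    · exact mul_inv_cancel₀ hα
    · exact one_mul 1
  have key : ∀ i j : Fin n, j < i → T i j * (c j * c i) = c i ^ 2 * S i j := by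
    intro i j hlt
    rw [hSdef i j]
    simp only [hc]
    by_cases hi : i = r₁
    · have hj : ¬ j = r₁ := fun h => absurd (h ▸ hi ▸ hlt) (lt_irrefl _)
      simp only [if_pos hi, if_neg hj]
      field_simp
    · by_cases hj : j = r₁
      · simp only [if_neg hi, if_pos hj]; ring
      · simp only [if_neg hi, if_neg hj]; ring
  have key' : ∀ i j : Fin n, j < i → S i j * (c' j * c' i) = c' i ^ 2 * T i j := by
    intro i j hlt
    rw [hSdef i j]
    simp only [hc']
    by_cases hi : i = r₁
    · have hj : ¬ j = r₁ := fun h => absurd (h ▸ hi ▸ hlt) (lt_irrefl _)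
      simp only [if_pos hi, if_neg hj]
      field_simp
    · by_cases hj : j = r₁
      · simp only [if_neg hi, if_pos hj]
        field_simp
      · simp only [if_neg hi, if_neg hj]; ring
  refine ntIso_of T S (fun k => C (c k) * X k) (fun k => C (c' k) * X k)
    (fun i j => if i = j then c i else 0)
    (scaleMem T S c key) (scaleMem S T c' key') ?_ ?_ ?_
  · intro i
    rw [map_mul, aeval_C, aeval_X]
    show algebraMap F (MvPolynomial (Fin n) F) (c i) * (C (c' i) * X i) = X i
    rw [MvPolynomial.algebraMap_eq, ← mul_assoc, ← map_mul, hcc' i, map_one, one_mul]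
  · intro i
    rw [map_mul, aeval_C, aeval_X]
    show algebraMap F (MvPolynomial (Fin n) F) (c' i) * (C (c i) * X i) = X i
    rw [MvPolynomial.algebraMap_eq, ← mul_assoc, ← map_mul, mul_comm (c' i) (c i), hcc' i,
      map_one, one_mul]
  · intro j
    rw [Finset.sum_congr rfl (fun i (_ : i ∈ Finset.univ) => show
        (C (if i = j then c i else 0) * X i : MvPolynomial (Fin n) F)
          = if i = j then C (c j) * X j else 0 by
      split_ifs with h
      · subst h; rfl
      · simp), Finset.sum_ite_eq' Finset.univ j (fun _ => C (c j) * X j)]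
    simp

lemma sltP (T S : Matrix (Fin n) (Fin n) F) (hT : SLT T) (h : ETOP T S) : SLT S := by
  obtain ⟨r₁, α, hα, hSdef⟩ := h
  intro i j hij
  rw [hSdef i j, hT i j hij]
  split_ifs <;> simp

end NTAux

namespace NTAux
open MvPolynomial
variable {n : ℕ}

lemma swapMem (r₁ r₂ : Fin n) (M N : Matrix (Fin n) (Fin n) F)
    (hdef : ∀ r k : Fin n, N r k = M (Equiv.swap r₁ r₂ r) (Equiv.swap r₁ r₂ k))
    (hcl : ∀ u v : Fin n, M u v ≠ 0 → v < u ∧ Equiv.swap r₁ r₂ v < Equiv.swap r₁ r₂ u) :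
    ∀ i, aeval (fun k => (X (Equiv.swap r₁ r₂ k) : MvPolynomial (Fin n) F)) (relP M i)
      ∈ ntIdeal N := by
  set σ := Equiv.swap r₁ r₂ with hσ
  intro i
  have hmain : aeval (fun k => (X (σ k) : MvPolynomial (Fin n) F)) (relP M i)
      = relP N (σ i) := by
    simp only [relP, map_sub, map_pow, map_sum, map_mul, aeval_X, aeval_C,
      MvPolynomial.algebraMap_eq]
    congr 1
    rw [Finset.sum_filter, Finset.sum_filter,
      ← Equiv.sum_comp σ (fun j' => if j' < σ i then C (N (σ i) j') * X j' * X (σ i) else 0)]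
    refine Finset.sum_congr rfl fun j _ => ?_
    have hN : N (σ i) (σ j) = M i j := by
      rw [hdef]
      simp [hσ, Equiv.swap_apply_self]
    rw [hN]
    by_cases hz : M i j = 0
    · simp [hz]
    · rw [if_pos (hcl i j hz).1, if_pos (hcl i j hz).2]
  rw [hmain]
  exact relP_mem N (σ i)

lemma stepF (T S : Matrix (Fin n) (Fin n) F) (hT : SLT T) (h : ETOF T S) : NTIso T S := by
  obtain ⟨r₁, r₂, h12, hrow, hcol, hSdef⟩ := h
  set σ := Equiv.swap r₁ r₂ with hσ
  have claimT : ∀ u v : Fin n, T u v ≠ 0 → v < u ∧ σ v < σ u := by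
    intro u v hne
    have hvu : v < u := lt_of_not_ge fun hle => hne (hT u v hle)
    refine ⟨hvu, ?_⟩
    by_cases hu2 : u = r₂
    · subst hu2
      have hv1 : v < r₁ := lt_of_not_ge fun hle => hne (hrow v hle)
      rw [hσ, Equiv.swap_apply_right,
        Equiv.swap_apply_of_ne_of_ne (ne_of_lt hv1) (ne_of_lt (hv1.trans h12))]
      exact hv1
    by_cases hu1 : u = r₁
    · subst hu1
      rw [hσ, Equiv.swap_apply_left,
        Equiv.swap_apply_of_ne_of_ne (ne_of_lt hvu) (ne_of_lt (hvu.trans h12))]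
      exact hvu.trans h12
    rw [hσ, Equiv.swap_apply_of_ne_of_ne hu1 hu2]
    by_cases hv1 : v = r₁
    · subst hv1
      rw [Equiv.swap_apply_left]
      rcases lt_or_ge u r₂ with hu | hu
      · exact absurd (hcol u hvu hu) hne
      · exact lt_of_le_of_ne hu (Ne.symm hu2)
    by_cases hv2 : v = r₂
    · subst hv2
      rw [Equiv.swap_apply_right]
      exact h12.trans hvu
    rw [Equiv.swap_apply_of_ne_of_ne hv1 hv2]
    exact hvu
  have hTdef : ∀ r k : Fin n, T r k = S (σ r) (σ k) := by
    intro r k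
    rw [hSdef (σ r) (σ k)]
    simp [hσ, Equiv.swap_apply_self]
  have claimS : ∀ u v : Fin n, S u v ≠ 0 → v < u ∧ σ v < σ u := by
    intro u v hne
    rw [hSdef u v] at hne
    have h1 := claimT _ _ hne
    refine ⟨?_, h1.1⟩
    have := h1.2
    simpa [hσ, Equiv.swap_apply_self] using this
  refine ntIso_of T S (fun k => X (σ k)) (fun k => X (σ k))
    (fun i j => if i = σ j then 1 else 0)
    (swapMem r₁ r₂ T S hSdef claimT) (swapMem r₁ r₂ S T hTdef claimS) ?_ ?_ ?_
  · intro i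
    simp [hσ, aeval_X, Equiv.swap_apply_self]
  · intro i
    simp [hσ, aeval_X, Equiv.swap_apply_self]
  · intro j
    rw [Finset.sum_congr rfl (fun i (_ : i ∈ Finset.univ) => show
        (C (if i = σ j then (1:F) else 0) * X i : MvPolynomial (Fin n) F)
          = if i = σ j then C 1 * X (σ j) else 0 by
      split_ifs with h
      · subst h; rfl
      · simp), Finset.sum_ite_eq' Finset.univ (σ j) (fun _ => C 1 * X (σ j))]
    simp

lemma sltF (T S : Matrix (Fin n) (Fin n) F) (hT : SLT T) (h : ETOF T S) : SLT S := by
  obtain ⟨r₁, r₂, h12, hrow, hcol, hSdef⟩ := h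
  intro r k hrk
  rw [hSdef r k]
  by_cases hr1 : r = r₁
  · rw [hr1, Equiv.swap_apply_left]
    refine hrow _ ?_
    by_cases hk1 : k = r₁
    · rw [hk1, Equiv.swap_apply_left]; exact le_of_lt h12
    by_cases hk2 : k = r₂
    · rw [hk2, Equiv.swap_apply_right]
    · rw [Equiv.swap_apply_of_ne_of_ne hk1 hk2]; exact hr1 ▸ hrk
  by_cases hr2 : r = r₂
  · rw [hr2, Equiv.swap_apply_right]
    by_cases hk1 : k = r₁
    · exfalso
      rw [hr2, hk1] at hrk
      exact absurd hrk (not_le.mpr h12)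
    by_cases hk2 : k = r₂
    · rw [hk2, Equiv.swap_apply_right]; exact hT r₁ r₁ le_rfl
    · rw [Equiv.swap_apply_of_ne_of_ne hk1 hk2]
      exact hT r₁ k (le_of_lt (lt_of_lt_of_le h12 (hr2 ▸ hrk)))
  rw [Equiv.swap_apply_of_ne_of_ne hr1 hr2]
  by_cases hk1 : k = r₁
  · rw [hk1, Equiv.swap_apply_left]
    exact hT r r₂ (le_of_lt (lt_of_le_of_lt (hk1 ▸ hrk) h12))
  by_cases hk2 : k = r₂
  · rw [hk2, Equiv.swap_apply_right]
    rcases le_or_gt r r₁ with hle | hlt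
    · exact hT r r₁ hle
    · exact hcol r hlt (lt_of_le_of_ne (hk2 ▸ hrk) hr2)
  rw [Equiv.swap_apply_of_ne_of_ne hk1 hk2]
  exact hT r k hrk

end NTAux

namespace NTAux
open MvPolynomial
variable {n : ℕ}

lemma relP_eq (M : Matrix (Fin n) (Fin n) F) (i : Fin n) :
    relP M i = X i ^ 2 - (∑ j ∈ Finset.univ.filter (fun j => j < i), C (M i j) * X j) * X i := by
  rw [relP, Finset.sum_mul]

lemma qMem (T S : Matrix (Fin n) (Fin n) F) (k₀ r₀ : Fin n) (β : F) (hk : k₀ < r₀)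
    (hrow : ∀ j : Fin n, k₀ < j → T r₀ j = 0)
    (hcond : k₀.val = 0 ∨ (0 < k₀.val ∧
      ∀ i : Fin n, i < k₀ → T r₀ i + T r₀ k₀ * T k₀ i = β * T k₀ i))
    (hSdef : ∀ r k : Fin n, S r k =
      if r = r₀ ∧ k = k₀ then T r₀ k₀ - 2 * β
      else if r₀ < r ∧ k = k₀ then T r k₀ + β * T r r₀
      else T r k) :
    ∀ i, aeval (fun k => if k = r₀ then X r₀ + C β * X k₀ else (X k : MvPolynomial (Fin n) F))
      (relP T i) ∈ ntIdeal S := by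
  set q : Fin n → MvPolynomial (Fin n) F :=
    fun k => if k = r₀ then X r₀ + C β * X k₀ else X k with hq
  have hqr : q r₀ = X r₀ + C β * X k₀ := by rw [hq]; simp
  have hqo : ∀ k, k ≠ r₀ → q k = X k := by intro k hkne; rw [hq]; simp [hkne]
  have aeval_relP : ∀ (M : Matrix (Fin n) (Fin n) F) (i : Fin n),
      aeval q (relP M i) = q i ^ 2
        - (∑ j ∈ Finset.univ.filter (fun j => j < i), C (M i j) * q j) * q i := by
    intro M i
    simp only [relP, map_sub, map_pow, map_sum, map_mul, aeval_X, aeval_C,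
      MvPolynomial.algebraMap_eq]
    rw [Finset.sum_mul]
  have hL1 : ∀ i0 : Fin n, (∑ j ∈ Finset.univ.filter (fun j => j < i0), C (T i0 j) * q j)
      = (∑ j ∈ Finset.univ.filter (fun j => j < i0), C (T i0 j) * X j)
        + (if r₀ < i0 then C (β * T i0 r₀) * X k₀ else 0) := by
    intro i0
    have hpt : ∀ j ∈ Finset.univ.filter (fun j => j < i0), C (T i0 j) * q j
        = C (T i0 j) * X j + (if j = r₀ then C (β * T i0 r₀) * X k₀ else 0) := by
      intro j _
      by_cases hj0 : j = r₀
      · subst hj0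
        rw [hqr, if_pos rfl, map_mul]
        ring
      · rw [hqo j hj0, if_neg hj0, add_zero]
    rw [Finset.sum_congr rfl hpt, Finset.sum_add_distrib]
    congr 1
    rw [Finset.sum_ite_eq' (Finset.univ.filter (fun j => j < i0)) r₀
      (fun _ => C (β * T i0 r₀) * X k₀)]
    simp [Finset.mem_filter]
  have hL2 : ∀ i0 : Fin n, i0 ≠ r₀ →
      (∑ j ∈ Finset.univ.filter (fun j => j < i0), C (S i0 j) * X j)
      = (∑ j ∈ Finset.univ.filter (fun j => j < i0), C (T i0 j) * X j)
        + (if r₀ < i0 then C (β * T i0 r₀) * X k₀ else 0) := by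
    intro i0 hi0
    have hpt : ∀ j ∈ Finset.univ.filter (fun j => j < i0), C (S i0 j) * X j
        = C (T i0 j) * X j
          + (if j = k₀ then (if r₀ < i0 then C (β * T i0 r₀) * X k₀ else 0) else 0) := by
      intro j _
      rw [hSdef i0 j]
      by_cases hjk : j = k₀
      · subst hjk
        rw [if_neg (fun hand => hi0 hand.1), if_pos rfl]
        by_cases hri : r₀ < i0
        · rw [if_pos ⟨hri, rfl⟩, if_pos hri, map_add, map_mul]
          ring
        · rw [if_neg (fun hand => hri hand.1), if_neg hri, add_zero]
      · rw [if_neg (fun hand => hjk hand.2), if_neg (fun hand => hjk hand.2), if_neg hjk,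
          add_zero]
    rw [Finset.sum_congr rfl hpt, Finset.sum_add_distrib]
    congr 1
    rw [Finset.sum_ite_eq' (Finset.univ.filter (fun j => j < i0)) k₀ _]
    by_cases hri : r₀ < i0
    · rw [if_pos (by simp [Finset.mem_filter]; exact hk.trans hri)]
    · simp [hri]
  intro i
  by_cases hi : i = r₀
  · rw [hi]
    -- main case i = r₀
    set A₀ : MvPolynomial (Fin n) F :=
      ∑ j : Fin n, (if j < k₀ then C (T r₀ j) * X j else 0) with hA
    set B₀ : MvPolynomial (Fin n) F :=
      ∑ j : Fin n, (if j < k₀ then C (T k₀ j) * X j else 0) with hB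
    have hL5 : (∑ j ∈ Finset.univ.filter (fun j => j < r₀), C (T r₀ j) * X j)
        = A₀ + C (T r₀ k₀) * X k₀ := by
      rw [Finset.sum_filter, hA]
      have hpt : ∀ j ∈ (Finset.univ : Finset (Fin n)),
          (if j < r₀ then C (T r₀ j) * X j else 0)
          = (if j < k₀ then C (T r₀ j) * X j else 0)
            + (if j = k₀ then C (T r₀ k₀) * X k₀ else 0) := by
        intro j _
        by_cases h1 : j < k₀
        · rw [if_pos (h1.trans hk), if_pos h1, if_neg (ne_of_lt h1), add_zero]
        by_cases h2 : j = k₀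
        · subst h2
          rw [if_pos hk, if_neg h1, if_pos rfl, zero_add]
        · have h3 : k₀ < j := lt_of_le_of_ne (le_of_not_gt h1) (Ne.symm h2)
          rw [if_neg h1, if_neg h2, add_zero]
          by_cases h4 : j < r₀
          · rw [if_pos h4, hrow j h3, map_zero, zero_mul]
          · rw [if_neg h4]
      rw [Finset.sum_congr rfl hpt, Finset.sum_add_distrib,
        Finset.sum_ite_eq' Finset.univ k₀ (fun _ => C (T r₀ k₀) * X k₀),
        if_pos (Finset.mem_univ k₀)]
    have hBeq : (∑ j ∈ Finset.univ.filter (fun j => j < k₀), C (S k₀ j) * X j) = B₀ := by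
      rw [Finset.sum_filter, hB]
      refine Finset.sum_congr rfl fun j _ => ?_
      by_cases h1 : j < k₀
      · rw [if_pos h1, if_pos h1, hSdef k₀ j,
          if_neg (fun hand => absurd hand.1 (ne_of_lt hk)),
          if_neg (fun hand => absurd hand.1 (not_lt_of_gt hk))]
      · rw [if_neg h1, if_neg h1]
    have hrowS : (∑ j ∈ Finset.univ.filter (fun j => j < r₀), C (S r₀ j) * X j)
        = (∑ j ∈ Finset.univ.filter (fun j => j < r₀), C (T r₀ j) * X j)
          + -(C (2 * β) * X k₀) := by
      have hpt : ∀ j ∈ Finset.univ.filter (fun j => j < r₀), C (S r₀ j) * X j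
          = C (T r₀ j) * X j + (if j = k₀ then -(C (2 * β) * X k₀) else 0) := by
        intro j _
        rw [hSdef r₀ j]
        by_cases hjk : j = k₀
        · subst hjk
          rw [if_pos ⟨rfl, rfl⟩, if_pos rfl, map_sub, map_mul]
          ring
        · rw [if_neg (fun hand => hjk hand.2), if_neg (fun hand => hjk hand.2), if_neg hjk,
            add_zero]
      rw [Finset.sum_congr rfl hpt, Finset.sum_add_distrib,
        Finset.sum_ite_eq' (Finset.univ.filter (fun j => j < r₀)) k₀
          (fun _ => -(C (2 * β) * X k₀)),
        if_pos (by simp [Finset.mem_filter]; exact hk)]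
    have hL6 : C β * A₀ = C (β ^ 2 - β * T r₀ k₀) * B₀ := by
      rw [hA, hB, Finset.mul_sum, Finset.mul_sum]
      refine Finset.sum_congr rfl fun j _ => ?_
      by_cases hjl : j < k₀
      · rw [if_pos hjl, if_pos hjl]
        have hcnd : T r₀ j + T r₀ k₀ * T k₀ j = β * T k₀ j := by
          rcases hcond with h0 | ⟨_, hc⟩
          · exfalso
            rw [Fin.lt_def, h0] at hjl
            exact Nat.not_lt_zero _ hjl
          · exact hc j hjl
        have hco : β * T r₀ j = (β ^ 2 - β * T r₀ k₀) * T k₀ j := by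
          linear_combination β * hcnd
        calc C β * (C (T r₀ j) * X j) = C (β * T r₀ j) * X j := by rw [map_mul]; ring
          _ = C ((β ^ 2 - β * T r₀ k₀) * T k₀ j) * X j := by rw [hco]
          _ = C (β ^ 2 - β * T r₀ k₀) * (C (T k₀ j) * X j) := by rw [map_mul]; ring
      · rw [if_neg hjl, if_neg hjl, mul_zero, mul_zero]
    have hC1 : (C β : MvPolynomial (Fin n) F) ^ 2
        = C (β ^ 2 - β * T r₀ k₀) + C β * C (T r₀ k₀) := by
      rw [← map_pow, ← map_mul, ← map_add]
      congr 1
      ring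
    have hC2 : (C (2 * β) : MvPolynomial (Fin n) F) = 2 * C β := by
      rw [map_mul, map_ofNat]
    have key : aeval q (relP T r₀)
        = relP S r₀ + C (β ^ 2 - β * T r₀ k₀) * relP S k₀ := by
      rw [aeval_relP T r₀, hqr, hL1 r₀, if_neg (lt_irrefl r₀), add_zero, hL5,
        relP_eq S r₀, hrowS, hL5, relP_eq S k₀, hBeq]
      linear_combination (-(X k₀ * X r₀) : MvPolynomial (Fin n) F) * hC2
        + ((X k₀ : MvPolynomial (Fin n) F) ^ 2) * hC1
        + (-(X k₀ : MvPolynomial (Fin n) F)) * hL6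
    rw [key]
    exact Ideal.add_mem _ (relP_mem S r₀) (Ideal.mul_mem_left _ _ (relP_mem S k₀))
  · have key : aeval q (relP T i) = relP S i := by
      rw [aeval_relP T i, hqo i hi, hL1 i, relP_eq S i, hL2 i hi]
    rw [key]
    exact relP_mem S i

lemma stepQ (T S : Matrix (Fin n) (Fin n) F) (h : ETOQ T S) : NTIso T S := by
  obtain ⟨k₀, r₀, β, hk, hrow, hcond, hSdef⟩ := h
  have hne : k₀ ≠ r₀ := ne_of_lt hk
  have hST : ∀ r k : Fin n, S r k = if r = r₀ ∧ k = k₀ then T r₀ k₀ - 2 * β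
      else if r₀ < r ∧ k = k₀ then T r k₀ + β * T r r₀ else T r k := hSdef
  -- reverse data
  have hrow' : ∀ j : Fin n, k₀ < j → S r₀ j = 0 := by
    intro j hj
    rw [hSdef r₀ j, if_neg (fun hand => absurd hand.2 (ne_of_gt hj)),
      if_neg (fun hand => absurd hand.1 (lt_irrefl r₀))]
    exact hrow j hj
  have hSrk : S r₀ k₀ = T r₀ k₀ - 2 * β := by
    rw [hSdef r₀ k₀, if_pos ⟨rfl, rfl⟩]
  have hSlow : ∀ i : Fin n, i < k₀ → S r₀ i = T r₀ i ∧ S k₀ i = T k₀ i := by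
    intro i hi
    constructor
    · rw [hSdef r₀ i, if_neg (fun hand => absurd hand.2 (ne_of_lt hi)),
        if_neg (fun hand => absurd hand.1 (lt_irrefl r₀))]
    · rw [hSdef k₀ i, if_neg (fun hand => absurd hand.1 hne),
        if_neg (fun hand => absurd hand.1 (not_lt_of_gt hk))]
  have hcond' : k₀.val = 0 ∨ (0 < k₀.val ∧
      ∀ i : Fin n, i < k₀ → S r₀ i + S r₀ k₀ * S k₀ i = (-β) * S k₀ i) := by
    rcases hcond with h0 | ⟨hpos, hc⟩
    · exact Or.inl h0
    · refine Or.inr ⟨hpos, fun i hi => ?_⟩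
      rw [(hSlow i hi).1, (hSlow i hi).2, hSrk]
      linear_combination hc i hi
  have hTdef : ∀ r k : Fin n, T r k = if r = r₀ ∧ k = k₀ then S r₀ k₀ - 2 * (-β)
      else if r₀ < r ∧ k = k₀ then S r k₀ + (-β) * S r r₀ else S r k := by
    intro r k
    by_cases h1 : r = r₀ ∧ k = k₀
    · rw [if_pos h1, hSrk, h1.1, h1.2]
      ring
    by_cases h2 : r₀ < r ∧ k = k₀
    · rw [if_neg h1, if_pos h2]
      have hra : S r k₀ = T r k₀ + β * T r r₀ := by
        rw [hSdef r k₀, if_neg (fun hand => h1 ⟨hand.1, h2.2⟩), if_pos ⟨h2.1, rfl⟩]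
      have hrb : S r r₀ = T r r₀ := by
        rw [hSdef r r₀, if_neg (fun hand : r = r₀ ∧ r₀ = k₀ => hne hand.2.symm),
          if_neg (fun hand : r₀ < r ∧ r₀ = k₀ => hne hand.2.symm)]
      rw [hra, hrb, h2.2]
      ring
    · rw [if_neg h1, if_neg h2, hSdef r k, if_neg h1, if_neg h2]
  refine ntIso_of T S
    (fun k => if k = r₀ then X r₀ + C β * X k₀ else X k)
    (fun k => if k = r₀ then X r₀ + C (-β) * X k₀ else X k)
    (fun i j => if i = j then 1 else if i = k₀ ∧ j = r₀ then β else 0)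
    (qMem T S k₀ r₀ β hk hrow hcond hSdef)
    (qMem S T k₀ r₀ (-β) hk hrow' hcond' hTdef) ?_ ?_ ?_
  · intro i
    beta_reduce
    by_cases hi : i = r₀
    · rw [hi, if_pos rfl, map_add, map_mul, aeval_X, aeval_X, aeval_C,
        MvPolynomial.algebraMap_eq]
      beta_reduce
      rw [if_pos rfl, if_neg hne, map_neg]
      ring
    · rw [if_neg hi, aeval_X]
      beta_reduce
      rw [if_neg hi]
  · intro i
    beta_reduce
    by_cases hi : i = r₀
    · rw [hi, if_pos rfl, map_add, map_mul, aeval_X, aeval_X, aeval_C,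
        MvPolynomial.algebraMap_eq]
      beta_reduce
      rw [if_pos rfl, if_neg hne, map_neg]
      ring
    · rw [if_neg hi, aeval_X]
      beta_reduce
      rw [if_neg hi]
  · intro j
    beta_reduce
    have hpt : ∀ i ∈ (Finset.univ : Finset (Fin n)),
        (C (if i = j then (1:F) else if i = k₀ ∧ j = r₀ then β else 0) * X i
          : MvPolynomial (Fin n) F)
        = (if i = j then X j else 0)
          + (if i = k₀ then (if j = r₀ then C β * X k₀ else 0) else 0) := by
      intro i _
      by_cases h1 : i = j
      · rw [if_pos h1, if_pos h1, map_one, one_mul, h1]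
        by_cases h2 : j = k₀
        · rw [if_pos h2]
          have h3 : ¬ j = r₀ := fun hj => hne (h2.symm.trans hj)
          rw [if_neg h3, add_zero]
        · rw [if_neg h2, add_zero]
      · rw [if_neg h1, if_neg h1]
        by_cases h2 : i = k₀ ∧ j = r₀
        · rw [if_pos h2, if_pos h2.1, if_pos h2.2, h2.1, zero_add]
        · by_cases h3 : i = k₀
          · have h4 : ¬ j = r₀ := fun hj => h2 ⟨h3, hj⟩
            rw [if_pos h3, if_neg h4, if_neg (fun hand => h2 ⟨h3, hand.2⟩), map_zero,
              zero_mul, zero_add]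
          · rw [if_neg h3, if_neg (fun hand => h3 hand.1), map_zero, zero_mul, add_zero]
    rw [Finset.sum_congr rfl hpt, Finset.sum_add_distrib,
      Finset.sum_ite_eq' Finset.univ j (fun _ => X j),
      Finset.sum_ite_eq' Finset.univ k₀ (fun _ => if j = r₀ then C β * X k₀ else 0),
      if_pos (Finset.mem_univ j), if_pos (Finset.mem_univ k₀)]
    by_cases hj : j = r₀
    · rw [hj, if_pos rfl, if_pos rfl]
    · rw [if_neg hj, if_neg hj, add_zero]

lemma sltQ (T S : Matrix (Fin n) (Fin n) F) (hT : SLT T) (h : ETOQ T S) : SLT S := by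
  obtain ⟨k₀, r₀, β, hk, hrow, hcond, hSdef⟩ := h
  intro r k hrk
  rw [hSdef r k]
  by_cases h1 : r = r₀ ∧ k = k₀
  · exfalso
    rw [h1.1, h1.2] at hrk
    exact absurd (lt_of_lt_of_le hk hrk) (lt_irrefl k₀)
  by_cases h2 : r₀ < r ∧ k = k₀
  · exfalso
    rw [h2.2] at hrk
    exact absurd ((hk.trans h2.1).trans_le hrk) (lt_irrefl k₀)
  · rw [if_neg h1, if_neg h2]
    exact hT r k hrk

end NTAux

/-- If `T` and `S` are equivalent by a finite sequence of elementary triangular operations,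
then `A(T) ≅ A(S)` via a degree-preserving isomorphism. -/
theorem stmt18 {n : ℕ} (h2 : (2 : F) ≠ 0) (T S : Matrix (Fin n) (Fin n) F)
    (hT : SLT T) (hS : SLT S)
    (h : Relation.ReflTransGen (fun A B : Matrix (Fin n) (Fin n) F =>
      ETOP A B ∨ ETOF A B ∨ ETOQ A B) T S) :
    NTIso T S := by
  have main : ∀ (B : Matrix (Fin n) (Fin n) F),
      Relation.ReflTransGen (fun A B : Matrix (Fin n) (Fin n) F =>
        ETOP A B ∨ ETOF A B ∨ ETOQ A B) T B → SLT B ∧ NTIso T B := by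
    intro B hB
    induction hB with
    | refl => exact ⟨hT, NTAux.ntIso_refl T⟩
    | tail _ hstep ih =>
        rcases ih with ⟨hSLTb, hiso⟩
        rcases hstep with hP | hF | hQ
        · exact ⟨NTAux.sltP _ _ hSLTb hP, NTAux.ntIso_trans hiso (NTAux.stepP _ _ hP)⟩
        · exact ⟨NTAux.sltF _ _ hSLTb hF, NTAux.ntIso_trans hiso (NTAux.stepF _ _ hSLTb hF)⟩
        · exact ⟨NTAux.sltQ _ _ hSLTb hQ, NTAux.ntIso_trans hiso (NTAux.stepQ _ _ hQ)⟩
  exact (main S h).2
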